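/- arXiv:1508.00664 — 6 statements merged into one kernel-verified Lean document; each statement's English description precedes it below -/
import Mathlib

section
/- Let N ≥ 1 and let λ_1 ≥ λ_2 ≥ ... ≥ λ_{2N} ≥ 0 be nonnegative reals. Consider all pairings given by injective maps ℓ, k : {1,...,N} → {1,...,2N} with disjoint images covering {1,...,2N} and λ_{ℓ(l)} ≥ λ_{k(l)} for all l, together with power allocations P_1,...,P_N ≥ 0 with ∑ P_l ≤ P/2, and rate R = ∑_{l=1}^N [log(1+P_l λ_{ℓ(l)}²) − log(1+P_l λ_{k(l)}²)]. Then the supremum of R over pairings and power allocations is attained by the pairing ℓ(l) = l, k(l) = 2N−l+1 (pairing strongest with weakest, second strongest with second weakest, etc.), i.e., for any pairing and power allocation there is a power allocation for the best-worst pairing achieving at least the same rate. -/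
open Finset

open Equiv Equiv.Perm Function in
private lemma log_supermod {x x' y y' : ℝ} (hx' : 0 ≤ x') (hy' : 0 ≤ y')
    (hx : x' ≤ x) (hy : y' ≤ y) :
    Real.log (1 + x * y') + Real.log (1 + x' * y)
      ≤ Real.log (1 + x * y) + Real.log (1 + x' * y') := by
  have hx0 : 0 ≤ x := hx'.trans hx
  have hy0 : 0 ≤ y := hy'.trans hy
  have p1 : (0:ℝ) < 1 + x * y' := by positivity
  have p2 : (0:ℝ) < 1 + x' * y := by positivity
  have p3 : (0:ℝ) < 1 + x * y := by positivity
  have p4 : (0:ℝ) < 1 + x' * y' := by positivity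
  rw [← Real.log_mul (by linarith) (by linarith),
    ← Real.log_mul (by linarith) (by linarith)]
  apply Real.log_le_log (by positivity)
  nlinarith [mul_nonneg (sub_nonneg.2 hx) (sub_nonneg.2 hy)]

private lemma perm_apply_inv_self {ι : Type*} (σ : Equiv.Perm ι) (a : ι) : σ (σ⁻¹ a) = a :=
  (Equiv.eq_symm_apply σ).mp rfl

open Equiv Equiv.Perm Function in
private lemma rearr_max {ι : Type*} [DecidableEq ι] {f g : ι → ℝ}
    (hf : ∀ i, 0 ≤ f i) (hg : ∀ i, 0 ≤ g i) {s : Finset ι} {σ : Equiv.Perm ι}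
    (hfg : MonovaryOn f g s) (hσ : {x | σ x ≠ x} ⊆ s) :
    ∑ i ∈ s, Real.log (1 + f i * g (σ i)) ≤ ∑ i ∈ s, Real.log (1 + f i * g i) := by
  classical
  revert hσ σ hfg
  apply Finset.induction_on_max_value (fun i ↦ toLex (g i, f i))
    (motive := fun t ↦ ∀ {σ : Equiv.Perm ι}, MonovaryOn f g t → {x | σ x ≠ x} ⊆ t →
      ∑ i ∈ t, Real.log (1 + f i * g (σ i)) ≤ ∑ i ∈ t, Real.log (1 + f i * g i)) s
  · simp
  intro a s has hamax hind σ hfg hσ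
  set τ : Equiv.Perm ι := σ.trans (swap a (σ a)) with hτ
  have hτs : {x | τ x ≠ x} ⊆ s := by
    intro x hx
    simp only [τ, Ne, Set.mem_setOf_eq, Equiv.coe_trans, Equiv.swap_comp_apply] at hx
    split_ifs at hx with h₁ h₂
    · obtain rfl | hax := eq_or_ne x a
      · contradiction
      · exact mem_of_mem_insert_of_ne (hσ fun h ↦ hax <| h.symm.trans h₁) hax
    · exact (hx <| σ.injective h₂.symm).elim
    · exact mem_of_mem_insert_of_ne (hσ hx) (ne_of_apply_ne _ h₂)
  specialize hind (hfg.subset <| subset_insert _ _) hτs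
  simp_rw [sum_insert has]
  refine le_trans ?_ (add_le_add_right hind _)
  obtain hσa | hσa := eq_or_ne a (σ a)
  · rw [hτ, ← hσa, swap_self, trans_refl]
  have h1s : σ⁻¹ a ∈ s := by
    rw [Ne, ← inv_eq_iff_eq] at hσa
    refine mem_of_mem_insert_of_ne (hσ fun h ↦ hσa ?_) hσa
    rwa [perm_apply_inv_self, eq_comm] at h
  simp only [← s.sum_erase_add _ h1s, add_comm]
  rw [← add_assoc, ← add_assoc]
  simp only [hτ, swap_apply_left, Function.comp_apply, Equiv.coe_trans, perm_apply_inv_self]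
  refine add_le_add ?_ (sum_congr rfl fun x hx ↦ ?_).le
  · have h₁ : f (σ⁻¹ a) ≤ f a := by
      specialize hamax (σ⁻¹ a) h1s
      rw [Prod.Lex.le_iff] at hamax
      cases' hamax with hamax hamax
      · exact hfg (mem_insert_of_mem h1s) (mem_insert_self _ _) hamax
      · exact hamax.2
    have h₂ : g (σ a) ≤ g a := by
      specialize hamax (σ a) (mem_of_mem_insert_of_ne (hσ <| σ.injective.ne hσa.symm) hσa.symm)
      rw [Prod.Lex.le_iff] at hamax
      cases' hamax with hamax hamax
      · exact hamax.le
      · exact hamax.1.le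
    have key := log_supermod (hf (σ⁻¹ a)) (hg (σ a)) h₁ h₂
    have hr : f a * g a + 1 = 1 + f a * g a := by ring
    rw [hr]
    linarith
  · rw [mem_erase, Ne, eq_inv_iff_eq] at hx
    rw [swap_apply_of_ne_of_ne hx.1 (σ.injective.ne _)]
    rintro rfl
    exact has hx.2

open Equiv Equiv.Perm Function in
private lemma rearr_min {ι : Type*} [DecidableEq ι] {f g : ι → ℝ}
    (hf : ∀ i, 0 ≤ f i) (hg : ∀ i, 0 ≤ g i) {s : Finset ι} {σ : Equiv.Perm ι}
    (hfg : AntivaryOn f g s) (hσ : {x | σ x ≠ x} ⊆ s) :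
    ∑ i ∈ s, Real.log (1 + f i * g i) ≤ ∑ i ∈ s, Real.log (1 + f i * g (σ i)) := by
  classical
  revert hσ σ hfg
  apply Finset.induction_on_max_value (fun i ↦ toLex (g i, OrderDual.toDual (f i)))
    (motive := fun t ↦ ∀ {σ : Equiv.Perm ι}, AntivaryOn f g t → {x | σ x ≠ x} ⊆ t →
      ∑ i ∈ t, Real.log (1 + f i * g i) ≤ ∑ i ∈ t, Real.log (1 + f i * g (σ i))) s
  · simp
  intro a s has hamax hind σ hfg hσ
  set τ : Equiv.Perm ι := σ.trans (swap a (σ a)) with hτ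
  have hτs : {x | τ x ≠ x} ⊆ s := by
    intro x hx
    simp only [τ, Ne, Set.mem_setOf_eq, Equiv.coe_trans, Equiv.swap_comp_apply] at hx
    split_ifs at hx with h₁ h₂
    · obtain rfl | hax := eq_or_ne x a
      · contradiction
      · exact mem_of_mem_insert_of_ne (hσ fun h ↦ hax <| h.symm.trans h₁) hax
    · exact (hx <| σ.injective h₂.symm).elim
    · exact mem_of_mem_insert_of_ne (hσ hx) (ne_of_apply_ne _ h₂)
  specialize hind (hfg.subset <| subset_insert _ _) hτs
  simp_rw [sum_insert has]
  refine le_trans (add_le_add_right hind _) ?_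
  obtain hσa | hσa := eq_or_ne a (σ a)
  · rw [hτ, ← hσa, swap_self, trans_refl]
  have h1s : σ⁻¹ a ∈ s := by
    rw [Ne, ← inv_eq_iff_eq] at hσa
    refine mem_of_mem_insert_of_ne (hσ fun h ↦ hσa ?_) hσa
    rwa [perm_apply_inv_self, eq_comm] at h
  simp only [← s.sum_erase_add _ h1s, add_comm]
  rw [← add_assoc, ← add_assoc]
  simp only [hτ, swap_apply_left, Function.comp_apply, Equiv.coe_trans, perm_apply_inv_self]
  refine add_le_add ?_ (sum_congr rfl fun x hx ↦ ?_).le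
  · have h₁ : f a ≤ f (σ⁻¹ a) := by
      specialize hamax (σ⁻¹ a) h1s
      rw [Prod.Lex.le_iff] at hamax
      cases' hamax with hamax hamax
      · exact hfg (mem_insert_of_mem h1s) (mem_insert_self _ _) hamax
      · exact hamax.2
    have h₂ : g (σ a) ≤ g a := by
      specialize hamax (σ a) (mem_of_mem_insert_of_ne (hσ <| σ.injective.ne hσa.symm) hσa.symm)
      rw [Prod.Lex.le_iff] at hamax
      cases' hamax with hamax hamax
      · exact hamax.le
      · exact hamax.1.le
    have key := log_supermod (hf a) (hg (σ a)) h₁ h₂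
    have hr : f a * g a + 1 = 1 + f a * g a := by ring
    rw [hr]
    linarith
  · rw [mem_erase, Ne, eq_inv_iff_eq] at hx
    rw [swap_apply_of_ne_of_ne hx.1 (σ.injective.ne _)]
    rintro rfl
    exact has hx.2

/-- The `l`-th largest value among an injectively-indexed subfamily of an antitone family
is at most the `l`-th largest value of the whole family. -/
private lemma sorted_le {N : ℕ} {c : Fin (2 * N) → ℝ}
    (hc : ∀ i j : Fin (2 * N), i ≤ j → c j ≤ c i)
    {e : Fin N → Fin (2 * N)} (he : Function.Injective e)
    {u : Fin N → ℝ} (hu : Antitone u) (ρ : Equiv.Perm (Fin N))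
    (hue : ∀ l, u l = c (e (ρ l))) (l : Fin N) :
    u l ≤ c ⟨l.val, by have := l.isLt; omega⟩ := by
  classical
  set lo : Fin (2 * N) := ⟨l.val, by have := l.isLt; omega⟩
  set S : Finset (Fin (2 * N)) := (Finset.Iic l).image (fun m => e (ρ m)) with hS
  have hinj : Function.Injective (fun m => e (ρ m)) := fun x y h => ρ.injective (he h)
  have hcard : S.card = l.val + 1 := by
    rw [hS, Finset.card_image_of_injective _ hinj, Fin.card_Iic]
  have : ¬ S ⊆ Finset.Iio lo := by
    intro hsub
    have := Finset.card_le_card hsub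
    rw [hcard, Fin.card_Iio] at this
    have hlo : (lo : Fin (2*N)).val = l.val := rfl
    omega
  obtain ⟨j, hjS, hj⟩ := Finset.not_subset.1 this
  rw [Finset.mem_Iio, not_lt] at hj
  obtain ⟨m, hm, hmj⟩ := Finset.mem_image.1 hjS
  rw [Finset.mem_Iic] at hm
  calc u l ≤ u m := hu hm
    _ = c (e (ρ m)) := hue m
    _ ≤ c lo := by rw [hmj]; exact hc lo j hj

/-- The `l`-th smallest value among an injectively-indexed subfamily of an antitone family
is at least the `l`-th smallest value of the whole family. -/
private lemma sorted_ge {N : ℕ} (hN : 1 ≤ N) {c : Fin (2 * N) → ℝ}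
    (hc : ∀ i j : Fin (2 * N), i ≤ j → c j ≤ c i)
    {e : Fin N → Fin (2 * N)} (he : Function.Injective e)
    {u : Fin N → ℝ} (hu : Monotone u) (π : Equiv.Perm (Fin N))
    (hue : ∀ l, u l = c (e (π l))) (l : Fin N) :
    c ⟨2 * N - 1 - l.val, lt_of_le_of_lt (Nat.sub_le _ _) (Nat.sub_lt (Nat.mul_pos two_pos l.pos) one_pos)⟩ ≤ u l := by
  classical
  set hi : Fin (2 * N) := ⟨2 * N - 1 - l.val, lt_of_le_of_lt (Nat.sub_le _ _) (Nat.sub_lt (Nat.mul_pos two_pos l.pos) one_pos)⟩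
  set S : Finset (Fin (2 * N)) := (Finset.Iic l).image (fun m => e (π m)) with hS
  have hinj : Function.Injective (fun m => e (π m)) := fun x y h => π.injective (he h)
  have hcard : S.card = l.val + 1 := by
    rw [hS, Finset.card_image_of_injective _ hinj, Fin.card_Iic]
  have : ¬ S ⊆ Finset.Ioi hi := by
    intro hsub
    have := Finset.card_le_card hsub
    rw [hcard, Fin.card_Ioi] at this
    have hhi : (hi : Fin (2*N)).val = 2 * N - 1 - l.val := rfl
    have hl := l.isLt
    omega
  obtain ⟨j, hjS, hj⟩ := Finset.not_subset.1 this
  rw [Finset.mem_Ioi, not_lt] at hj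
  obtain ⟨m, hm, hmj⟩ := Finset.mem_image.1 hjS
  rw [Finset.mem_Iic] at hm
  calc c hi ≤ c (e (π m)) := by rw [hmj]; exact hc j hi hj
    _ = u m := (hue m).symm
    _ ≤ u l := hu hm

/-- Theorem 1: for gains `λ_0 ≥ λ_1 ≥ ... ≥ λ_{2N-1} ≥ 0`, any valid OT-pairing
`(ℓ, k)` with any power allocation `Q` (nonnegative, total at most `P/2`) is
outperformed by the best-worst pairing `ℓ*(l) = l`, `k*(l) = 2N-1-l` under a
suitable power allocation. -/
theorem stmt4 (N : ℕ) (hN : 1 ≤ N) (P : ℝ) (hP : 0 < P)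
    (lam : Fin (2 * N) → ℝ)
    (hmono : ∀ i j : Fin (2 * N), i ≤ j → lam j ≤ lam i)
    (hnn : ∀ i, 0 ≤ lam i)
    (ℓ k : Fin N → Fin (2 * N))
    (hinjl : Function.Injective ℓ) (hinjk : Function.Injective k)
    (hdisj : ∀ l j, ℓ l ≠ k j)
    (hcover : ∀ i : Fin (2 * N), (∃ l, ℓ l = i) ∨ (∃ l, k l = i))
    (hord : ∀ l, lam (ℓ l) ≥ lam (k l))
    (Q : Fin N → ℝ) (hQ : ∀ l, 0 ≤ Q l) (hQsum : ∑ l, Q l ≤ P / 2) :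
    ∃ Q' : Fin N → ℝ, (∀ l, 0 ≤ Q' l) ∧ (∑ l, Q' l ≤ P / 2) ∧
      ∑ l, (Real.log (1 + Q l * (lam (ℓ l)) ^ 2)
              - Real.log (1 + Q l * (lam (k l)) ^ 2))
      ≤ ∑ l : Fin N,
          (Real.log (1 + Q' l * (lam ⟨l.val, by have := l.isLt; omega⟩) ^ 2)
            - Real.log (1 + Q' l * (lam ⟨2 * N - 1 - l.val, by have := l.isLt; omega⟩) ^ 2)) := by
  classical
  set c : Fin (2 * N) → ℝ := fun i => (lam i) ^ 2 with hc_def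
  have hc : ∀ i j : Fin (2 * N), i ≤ j → c j ≤ c i := fun i j h =>
    pow_le_pow_left₀ (hnn j) (hmono i j h) 2
  have hc0 : ∀ i, 0 ≤ c i := fun i => sq_nonneg _
  -- sort the powers in decreasing order
  set τ : Equiv.Perm (Fin N) := Tuple.sort (fun l => -(Q l)) with hτ_def
  set q : Fin N → ℝ := fun l => Q (τ l) with hq_def
  have hq_anti : Antitone q := by
    intro i j hij
    have := Tuple.monotone_sort (fun l => -(Q l)) hij
    simpa [hq_def] using this
  have hq0 : ∀ l, 0 ≤ q l := fun l => hQ _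
  set A : Fin N → ℝ := fun l => c (ℓ (τ l)) with hA_def
  set B : Fin N → ℝ := fun l => c (k (τ l)) with hB_def
  -- sort A decreasingly, B increasingly
  set ρ : Equiv.Perm (Fin N) := Tuple.sort (fun l => -(A l)) with hρ_def
  set a : Fin N → ℝ := fun l => A (ρ l) with ha_def
  have ha_anti : Antitone a := by
    intro i j hij
    have := Tuple.monotone_sort (fun l => -(A l)) hij
    simpa [ha_def] using this
  set π : Equiv.Perm (Fin N) := Tuple.sort B with hπ_def
  set b : Fin N → ℝ := fun l => B (π l) with hb_def
  have hb_mono : Monotone b := Tuple.monotone_sort B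
  -- comparison with the extremes
  have ha_le : ∀ l : Fin N, a l ≤ c ⟨l.val, by have := l.isLt; omega⟩ :=
    sorted_le hc (hinjl.comp τ.injective) ha_anti ρ (fun l => rfl)
  have hb_ge : ∀ l : Fin N, c ⟨2 * N - 1 - l.val, by have := l.isLt; omega⟩ ≤ b l :=
    sorted_ge hN hc (hinjk.comp τ.injective) hb_mono π (fun l => rfl)
  refine ⟨q, hq0, ?_, ?_⟩
  · have : ∑ l, q l = ∑ l, Q l := Equiv.sum_comp τ Q
    linarith
  -- main inequality
  have step0 : ∑ l, (Real.log (1 + Q l * (lam (ℓ l)) ^ 2)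
      - Real.log (1 + Q l * (lam (k l)) ^ 2))
      = ∑ l, (Real.log (1 + q l * A l) - Real.log (1 + q l * B l)) :=
    (Equiv.sum_comp τ (fun l => Real.log (1 + Q l * (lam (ℓ l)) ^ 2)
      - Real.log (1 + Q l * (lam (k l)) ^ 2))).symm
  rw [step0]
  have hmv : MonovaryOn q a (Finset.univ : Finset (Fin N)) := by
    intro i _ j _ hij
    rcases le_total i j with h | h
    · exact absurd (ha_anti h) (not_le.2 hij)
    · exact hq_anti h
  have hav : AntivaryOn q b (Finset.univ : Finset (Fin N)) := by
    intro i _ j _ hij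
    rcases le_total j i with h | h
    · exact absurd (hb_mono h) (not_le.2 hij)
    · exact hq_anti h
  have hA0 : ∀ l, 0 ≤ a l := fun l => hc0 _
  have hB0 : ∀ l, 0 ≤ b l := fun l => hc0 _
  have ineq1 : ∑ l, Real.log (1 + q l * A l) ≤
      ∑ l : Fin N, Real.log (1 + q l * c ⟨l.val, by have := l.isLt; omega⟩) := by
    have h1 : ∑ l, Real.log (1 + q l * A l)
        = ∑ l, Real.log (1 + q l * a (ρ⁻¹ l)) := by
      apply Finset.sum_congr rfl
      intro l _
      simp [ha_def]
    rw [h1]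
    calc ∑ l, Real.log (1 + q l * a (ρ⁻¹ l))
        ≤ ∑ l, Real.log (1 + q l * a l) :=
          rearr_max hq0 hA0 hmv (by intro x _; exact Finset.mem_univ x)
      _ ≤ ∑ l : Fin N, Real.log (1 + q l * c ⟨l.val, by have := l.isLt; omega⟩) := by
          apply Finset.sum_le_sum
          intro l _
          have hpos : (0:ℝ) < 1 + q l * a l := by
            have := mul_nonneg (hq0 l) (hA0 l); linarith
          exact Real.log_le_log hpos (by nlinarith [mul_le_mul_of_nonneg_left (ha_le l) (hq0 l)])
  have ineq2 : ∑ l : Fin N, Real.log (1 + q l * c ⟨2 * N - 1 - l.val, by have := l.isLt; omega⟩)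
      ≤ ∑ l, Real.log (1 + q l * B l) := by
    have h1 : ∑ l, Real.log (1 + q l * B l)
        = ∑ l, Real.log (1 + q l * b (π⁻¹ l)) := by
      apply Finset.sum_congr rfl
      intro l _
      simp [hb_def]
    rw [h1]
    calc ∑ l : Fin N, Real.log (1 + q l * c ⟨2 * N - 1 - l.val, by have := l.isLt; omega⟩)
        ≤ ∑ l, Real.log (1 + q l * b l) := by
          apply Finset.sum_le_sum
          intro l _
          have hpos : (0:ℝ) < 1 + q l * c ⟨2 * N - 1 - l.val, by have := l.isLt; omega⟩ := by
            have := mul_nonneg (hq0 l) (hc0 (⟨2 * N - 1 - l.val, by have := l.isLt; omega⟩ : Fin (2*N)))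
            linarith
          exact Real.log_le_log hpos
            (by nlinarith [mul_le_mul_of_nonneg_left (hb_ge l) (hq0 l)])
      _ ≤ ∑ l, Real.log (1 + q l * b (π⁻¹ l)) :=
          rearr_min hq0 hB0 hav (by intro x _; exact Finset.mem_univ x)
  have expand : ∀ (u v : Fin N → ℝ), ∑ l, (u l - v l) = ∑ l, u l - ∑ l, v l :=
    fun u v => Finset.sum_sub_distrib u v
  rw [expand, expand]
  linarith
end

section
/- In an optimal pairing maximizing the total rate, for any pair indices l, j it cannot happen that λ_{ℓ(l)} > λ_{k(l)} > λ_{ℓ(j)} > λ_{k(j)}: if this configuration holds, then swapping k(l) with ℓ(j) (keeping the same power allocation with positive powers) strictly increases the total rate. -/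
open Finset

/-- Lemma 2: if for two pair indices `l ≠ j` we have
`λ_{ℓ(l)} > λ_{k(l)} > λ_{ℓ(j)} > λ_{k(j)}`, then the swap replacing pair `l`
by `(ℓ(l), ℓ(j))` and pair `j` by `(k(l), k(j))` (with the same positive
powers) strictly increases the total rate; hence an optimal pairing cannot
contain this configuration. -/
theorem stmt6 (N : ℕ) (lam : Fin (2 * N) → ℝ) (hpos : ∀ i, 0 < lam i)
    (ℓ k : Fin N → Fin (2 * N)) (Pw : Fin N → ℝ) (hPw : ∀ l, 0 < Pw l)
    (hord : ∀ l, lam (k l) < lam (ℓ l))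
    (l j : Fin N) (hlj : l ≠ j)
    (h1 : lam (k l) > lam (ℓ j)) :
    ∑ t : Fin N, (Real.log (1 + Pw t * (lam (ℓ t)) ^ 2)
                    - Real.log (1 + Pw t * (lam (k t)) ^ 2))
    < ∑ t : Fin N,
        (Real.log (1 + Pw t * (lam (Function.update ℓ j (k l) t)) ^ 2)
          - Real.log (1 + Pw t * (lam (Function.update k l (ℓ j) t)) ^ 2)) := by
  have key : ∀ (P a b : ℝ), 0 < P → 0 < a → a < b →
      Real.log (1 + P * a ^ 2) < Real.log (1 + P * b ^ 2) := by
    intro P a b hP ha hab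
    apply Real.log_lt_log
    · positivity
    · have h2 : a ^ 2 < b ^ 2 := by nlinarith
      nlinarith
  apply Finset.sum_lt_sum
  · intro t _
    rcases eq_or_ne t l with rfl | htl
    · rw [Function.update_of_ne hlj, Function.update_self]
      have := key (Pw t) (lam (ℓ j)) (lam (k t)) (hPw t) (hpos _) h1
      linarith
    · rcases eq_or_ne t j with rfl | htj
      · rw [Function.update_self, Function.update_of_ne (Ne.symm hlj)]
        have := key (Pw t) (lam (ℓ t)) (lam (k l)) (hPw t) (hpos _) h1
        linarith
      · rw [Function.update_of_ne htj, Function.update_of_ne htl]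
  · refine ⟨l, Finset.mem_univ l, ?_⟩
    rw [Function.update_of_ne hlj, Function.update_self]
    have := key (Pw l) (lam (ℓ j)) (lam (k l)) (hPw l) (hpos _) h1
    linarith
end

section
/- For any pairing and positive power allocation achieving the maximal rate, λ_{ℓ(l)} ≥ λ_{k(j)} for all pair indices l, j; that is, every 'strong' channel gain is at least every 'weak' channel gain. -/
open Finset

/-- A valid OT-pairing of `2N` parallel channels with gains `lam`. -/
structure OTPairing (N : ℕ) (lam : Fin (2 * N) → ℝ) where
  strong : Fin N → Fin (2 * N)
  weak : Fin N → Fin (2 * N)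
  inj_strong : Function.Injective strong
  inj_weak : Function.Injective weak
  disj : ∀ l j, strong l ≠ weak j
  cover : ∀ i : Fin (2 * N), (∃ l, strong l = i) ∨ (∃ l, weak l = i)
  ord : ∀ l, lam (weak l) < lam (strong l)

/-- Rate of a pairing under power allocation `Pw`. -/
noncomputable def pairingRate {N : ℕ} {lam : Fin (2 * N) → ℝ}
    (pr : OTPairing N lam) (Pw : Fin N → ℝ) : ℝ :=
  ∑ l : Fin N, (Real.log (1 + Pw l * (lam (pr.strong l)) ^ 2)
                  - Real.log (1 + Pw l * (lam (pr.weak l)) ^ 2))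

/-- Lemma 3: if a pairing with positive powers is optimal (no repairing with
the same powers achieves a strictly larger rate), then every strong gain is
at least every weak gain: `λ_{ℓ(l)} ≥ λ_{k(j)}` for all `l, j`. -/
theorem stmt7 (N : ℕ) (lam : Fin (2 * N) → ℝ) (hpos : ∀ i, 0 < lam i)
    (hdist : Function.Injective lam)
    (pr : OTPairing N lam) (Pw : Fin N → ℝ) (hPw : ∀ l, 0 < Pw l)
    (hopt : ∀ pr' : OTPairing N lam, pairingRate pr' Pw ≤ pairingRate pr Pw) :
    ∀ l j, lam (pr.weak j) ≤ lam (pr.strong l) := by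
  intro l j
  by_contra hc
  push_neg at hc
  have hlj : l ≠ j := by
    rintro rfl
    exact absurd (pr.ord l) (not_lt.2 hc.le)
  set s := pr.strong with hs
  set w := pr.weak with hw
  have hord := pr.ord
  have hinjS : Function.Injective (Function.update s l (w j)) := by
    intro a b hab
    simp only [Function.update_apply] at hab
    split_ifs at hab with h1 h2 h2
    · exact h1.trans h2.symm
    · exact absurd hab.symm (pr.disj b j)
    · exact absurd hab (pr.disj a j)
    · exact pr.inj_strong hab
  have hinjW : Function.Injective (Function.update w j (s l)) := by
    intro a b hab
    simp only [Function.update_apply] at hab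
    split_ifs at hab with h1 h2 h2
    · exact h1.trans h2.symm
    · exact absurd hab (pr.disj l b)
    · exact absurd hab.symm (pr.disj l a)
    · exact pr.inj_weak hab
  let pr' : OTPairing N lam :=
    { strong := Function.update s l (w j)
      weak := Function.update w j (s l)
      inj_strong := hinjS
      inj_weak := hinjW
      disj := by
        intro a b
        simp only [Function.update_apply]
        split_ifs with h1 h2 h2
        · exact fun h => pr.disj l j h.symm
        · exact fun h => h2 (pr.inj_weak h.symm)
        · exact fun h => h1 (pr.inj_strong h)
        · exact pr.disj a b
      cover := by
        intro i
        rcases pr.cover i with ⟨a, ha⟩ | ⟨a, ha⟩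
        · rcases eq_or_ne a l with rfl | hal
          · exact Or.inr ⟨j, by simpa [Function.update_apply] using ha⟩
          · exact Or.inl ⟨a, by simpa [Function.update_apply, hal] using ha⟩
        · rcases eq_or_ne a j with rfl | haj
          · exact Or.inl ⟨l, by simpa [Function.update_apply] using ha⟩
          · exact Or.inr ⟨a, by simpa [Function.update_apply, haj] using ha⟩
      ord := by
        intro i
        show lam (Function.update w j (s l) i) < lam (Function.update s l (w j) i)
        simp only [Function.update_apply]
        split_ifs with h1 h2 h2
        · exact absurd (h2.symm.trans h1) hlj
        · rw [h1]; exact hc.trans (hord j)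
        · rw [h2]; exact (hord l).trans hc
        · exact hord i }
  have hlog : ∀ (P a b : ℝ), 0 < P → 0 < a → a < b →
      Real.log (1 + P * a ^ 2) < Real.log (1 + P * b ^ 2) := by
    intro P a b hP ha hab
    apply Real.log_lt_log (by positivity)
    nlinarith [mul_pos hP (mul_pos (sub_pos.2 hab) (show (0:ℝ) < a + b by linarith))]
  set t : Fin N → ℝ := fun i =>
    Real.log (1 + Pw i * (lam (pr.strong i)) ^ 2)
      - Real.log (1 + Pw i * (lam (pr.weak i)) ^ 2) with ht
  set t' : Fin N → ℝ := fun i =>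
    Real.log (1 + Pw i * (lam (pr'.strong i)) ^ 2)
      - Real.log (1 + Pw i * (lam (pr'.weak i)) ^ 2) with ht'
  have hsum : pairingRate pr' Pw - pairingRate pr Pw = ∑ i : Fin N, (t' i - t i) := by
    rw [Finset.sum_sub_distrib]; rfl
  have hsub : ({l, j} : Finset (Fin N)) ⊆ Finset.univ := Finset.subset_univ _
  have hzero : ∀ i ∈ Finset.univ, i ∉ ({l, j} : Finset (Fin N)) → t' i - t i = 0 := by
    intro i _ hi
    simp only [Finset.mem_insert, Finset.mem_singleton, not_or] at hi
    show (Real.log (1 + Pw i * (lam (Function.update s l (w j) i)) ^ 2)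
      - Real.log (1 + Pw i * (lam (Function.update w j (s l) i)) ^ 2)) - t i = 0
    rw [Function.update_apply, Function.update_apply, if_neg hi.1, if_neg hi.2]
    simp [ht, hs, hw]
  have hsum2 : ∑ i : Fin N, (t' i - t i) = (t' l - t l) + (t' j - t j) := by
    rw [← Finset.sum_subset hsub hzero, Finset.sum_pair hlj]
  have h1 := hlog (Pw l) (lam (s l)) (lam (w j)) (hPw l) (hpos _) hc
  have h2 := hlog (Pw j) (lam (s l)) (lam (w j)) (hPw j) (hpos _) hc
  have htl : t' l = Real.log (1 + Pw l * (lam (w j)) ^ 2)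
      - Real.log (1 + Pw l * (lam (w l)) ^ 2) := by
    show (Real.log (1 + Pw l * (lam (Function.update s l (w j) l)) ^ 2)
      - Real.log (1 + Pw l * (lam (Function.update w j (s l) l)) ^ 2)) = _
    rw [Function.update_apply, Function.update_apply, if_pos rfl, if_neg hlj]
  have htj : t' j = Real.log (1 + Pw j * (lam (s j)) ^ 2)
      - Real.log (1 + Pw j * (lam (s l)) ^ 2) := by
    show (Real.log (1 + Pw j * (lam (Function.update s l (w j) j)) ^ 2)
      - Real.log (1 + Pw j * (lam (Function.update w j (s l) j)) ^ 2)) = _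
    rw [Function.update_apply, Function.update_apply, if_pos rfl, if_neg hlj.symm]
  have htl' : t l = Real.log (1 + Pw l * (lam (s l)) ^ 2)
      - Real.log (1 + Pw l * (lam (w l)) ^ 2) := rfl
  have htj' : t j = Real.log (1 + Pw j * (lam (s j)) ^ 2)
      - Real.log (1 + Pw j * (lam (w j)) ^ 2) := rfl
  have hgt : pairingRate pr Pw < pairingRate pr' Pw := by
    have h0 : 0 < pairingRate pr' Pw - pairingRate pr Pw := by
      rw [hsum, hsum2, htl, htj, htl', htj']
      linarith
    linarith
  exact absurd (hopt pr') (not_le.2 hgt)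
end

section
/- For any pairing and positive power allocation at which no single transposition of channel labels strictly increases the rate, if λ_{ℓ(l)} > λ_{ℓ(j)} then λ_{k(l)} ≤ λ_{k(j)}; i.e., the order of strong gains across pairs is reversed by the order of weak gains. -/
open Finset

/-- Total rate of pairing `(ℓ, k)` with powers `Pw`. -/
noncomputable def totalRate {N : ℕ} (lam : Fin (2 * N) → ℝ)
    (ℓ k : Fin N → Fin (2 * N)) (Pw : Fin N → ℝ) : ℝ :=
  ∑ t : Fin N, (Real.log (1 + Pw t * (lam (ℓ t)) ^ 2)
                  - Real.log (1 + Pw t * (lam (k t)) ^ 2))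

/-- For `0 < b < a`, the gap `log(1+P a) - log(1+P b)` is strictly increasing in `P > 0`. -/
lemma log_gap_strict_mono {a b P Q : ℝ} (hb : 0 < b) (hba : b < a)
    (hP : 0 < P) (hPQ : P < Q) :
    Real.log (1 + P * a) - Real.log (1 + P * b)
      < Real.log (1 + Q * a) - Real.log (1 + Q * b) := by
  have hQ : 0 < Q := hP.trans hPQ
  have ha : 0 < a := hb.trans hba
  have h1 : (0:ℝ) < 1 + P * b := by nlinarith
  have h2 : (0:ℝ) < 1 + P * a := by nlinarith
  have h3 : (0:ℝ) < 1 + Q * b := by nlinarith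
  have h4 : (0:ℝ) < 1 + Q * a := by nlinarith
  rw [← Real.log_div (ne_of_gt h2) (ne_of_gt h1),
      ← Real.log_div (ne_of_gt h4) (ne_of_gt h3)]
  apply Real.log_lt_log (by positivity)
  rw [div_lt_div_iff₀ h1 h3]
  nlinarith

/-- Lemma 4: at a pairing with distinct positive gains, pairwise-distinct
positive powers, where no single transposition of channel labels (swapping the
strong labels of two pairs, swapping the weak labels of two pairs, or the cross
swap exchanging `k(l)` with `ℓ(j)`) strictly increases the rate, the order of
strong gains is reversed by the order of weak gains:
`λ_{ℓ(l)} > λ_{ℓ(j)} → λ_{k(l)} ≤ λ_{k(j)}`. -/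
theorem stmt8 (N : ℕ) (lam : Fin (2 * N) → ℝ) (hpos : ∀ i, 0 < lam i)
    (hdist : Function.Injective lam)
    (ℓ k : Fin N → Fin (2 * N)) (hord : ∀ t, lam (k t) < lam (ℓ t))
    (Pw : Fin N → ℝ) (hPw : ∀ t, 0 < Pw t)
    (hPdist : ∀ t s : Fin N, t ≠ s → Pw t ≠ Pw s)
    (hswap_strong : ∀ l j : Fin N,
      totalRate lam (Function.update (Function.update ℓ l (ℓ j)) j (ℓ l)) k Pw
        ≤ totalRate lam ℓ k Pw)
    (hswap_weak : ∀ l j : Fin N,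
      totalRate lam ℓ (Function.update (Function.update k l (k j)) j (k l)) Pw
        ≤ totalRate lam ℓ k Pw)
    (hswap_cross : ∀ l j : Fin N,
      totalRate lam (Function.update ℓ j (k l)) (Function.update k l (ℓ j)) Pw
        ≤ totalRate lam ℓ k Pw) :
    ∀ l j : Fin N, lam (ℓ l) > lam (ℓ j) → lam (k l) ≤ lam (k j) := by
  intro l j hll
  by_contra hkk
  push_neg at hkk
  have hlj : l ≠ j := by
    intro h; rw [h] at hll; exact lt_irrefl _ hll
  -- squared gains
  have hA : lam (ℓ j) ^ 2 < lam (ℓ l) ^ 2 :=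
    pow_lt_pow_left₀ hll (le_of_lt (hpos _)) (by norm_num)
  have hB : lam (k j) ^ 2 < lam (k l) ^ 2 :=
    pow_lt_pow_left₀ hkk (le_of_lt (hpos _)) (by norm_num)
  have hAj : 0 < lam (ℓ j) ^ 2 := pow_pos (hpos _) 2
  have hBj : 0 < lam (k j) ^ 2 := pow_pos (hpos _) 2
  -- sum difference lemma
  have hsum : ∀ (f g : Fin N → ℝ), (∀ t, t ≠ l → t ≠ j → f t = g t) →
      (∑ t, f t) - (∑ t, g t) = (f l - g l) + (f j - g j) := by
    intro f g h
    rw [← Finset.sum_sub_distrib]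
    have : (∑ t, (f t - g t)) = ∑ t ∈ ({l, j} : Finset (Fin N)), (f t - g t) := by
      symm
      apply Finset.sum_subset (Finset.subset_univ _)
      intro x _ hx
      simp only [Finset.mem_insert, Finset.mem_singleton, not_or] at hx
      rw [h x hx.1 hx.2]; ring
    rw [this, Finset.sum_pair hlj]
  -- extract the strong-swap inequality
  have hstrong := hswap_strong l j
  have hstrongd : totalRate lam (Function.update (Function.update ℓ l (ℓ j)) j (ℓ l)) k Pw
      - totalRate lam ℓ k Pw
      = (Real.log (1 + Pw l * lam (ℓ j) ^ 2) - Real.log (1 + Pw l * lam (ℓ l) ^ 2))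
        + (Real.log (1 + Pw j * lam (ℓ l) ^ 2) - Real.log (1 + Pw j * lam (ℓ j) ^ 2)) := by
    unfold totalRate
    rw [hsum _ _ (by
      intro t htl htj
      rw [Function.update_of_ne htj, Function.update_of_ne htl])]
    rw [Function.update_of_ne hlj, Function.update_self, Function.update_self]
    ring
  have hstrong' : Real.log (1 + Pw j * lam (ℓ l) ^ 2) - Real.log (1 + Pw j * lam (ℓ j) ^ 2)
      ≤ Real.log (1 + Pw l * lam (ℓ l) ^ 2) - Real.log (1 + Pw l * lam (ℓ j) ^ 2) := by
    have := sub_nonpos.mpr hstrong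
    rw [hstrongd] at this
    linarith
  -- extract the weak-swap inequality
  have hweak := hswap_weak l j
  have hweakd : totalRate lam ℓ (Function.update (Function.update k l (k j)) j (k l)) Pw
      - totalRate lam ℓ k Pw
      = (Real.log (1 + Pw l * lam (k l) ^ 2) - Real.log (1 + Pw l * lam (k j) ^ 2))
        + (Real.log (1 + Pw j * lam (k j) ^ 2) - Real.log (1 + Pw j * lam (k l) ^ 2)) := by
    unfold totalRate
    rw [hsum _ _ (by
      intro t htl htj
      rw [Function.update_of_ne htj, Function.update_of_ne htl])]
    rw [Function.update_of_ne hlj, Function.update_self, Function.update_self]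
    ring
  have hweak' : Real.log (1 + Pw l * lam (k l) ^ 2) - Real.log (1 + Pw l * lam (k j) ^ 2)
      ≤ Real.log (1 + Pw j * lam (k l) ^ 2) - Real.log (1 + Pw j * lam (k j) ^ 2) := by
    have := sub_nonpos.mpr hweak
    rw [hweakd] at this
    linarith
  -- from the strong swap, P_j < P_l
  have hPjl : Pw j < Pw l := by
    rcases lt_trichotomy (Pw j) (Pw l) with h | h | h
    · exact h
    · exact absurd h (hPdist j l (Ne.symm hlj))
    · exact absurd hstrong' (not_le.mpr
        (log_gap_strict_mono hAj hA (hPw l) h))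
  -- from the weak swap, P_l ≤ P_j : contradiction
  exact absurd hweak' (not_le.mpr (log_gap_strict_mono hBj hB (hPw j) hPjl))
end

section
/- Fix λ > λ' > 0 and η > 0. The function J(P) = log(1+Pλ²) − log(1+Pλ'²) − ηP over P ≥ 0 is maximized at P* = max(0, √(f(λ,λ',η)) − (1/2)(1/λ² + 1/λ'²)), where f(λ,λ',η) = (1/4)(1/λ'² − 1/λ²)[(1/λ'² − 1/λ²) + 4/η]. -/
set_option maxHeartbeats 1000000


/-- For `λ > λ' > 0` and `η > 0`, the function
`J(P) = log(1+Pλ²) − log(1+Pλ'²) − ηP` on `P ≥ 0` is maximized at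
`P* = max(0, √(f(λ,λ',η)) − (1/2)(1/λ² + 1/λ'²))` where
`f(λ,λ',η) = (1/4)(1/λ'² − 1/λ²)[(1/λ'² − 1/λ²) + 4/η]`. -/
theorem stmt11 (lam lam' η : ℝ) (h' : 0 < lam') (h : lam' < lam) (hη : 0 < η) :
    ∀ Q ∈ Set.Ici (0 : ℝ),
      Real.log (1 + Q * lam ^ 2) - Real.log (1 + Q * lam' ^ 2) - η * Q
      ≤ (let Pstar := max 0
            (Real.sqrt ((1 / 4) * (1 / lam' ^ 2 - 1 / lam ^ 2) *
                ((1 / lam' ^ 2 - 1 / lam ^ 2) + 4 / η))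
              - (1 / 2) * (1 / lam ^ 2 + 1 / lam' ^ 2));
          Real.log (1 + Pstar * lam ^ 2) - Real.log (1 + Pstar * lam' ^ 2)
            - η * Pstar) := by
  intro Q hQ
  simp only [Set.mem_Ici] at hQ
  dsimp only
  have hlam : 0 < lam := h'.trans h
  set a : ℝ := 1 / lam ^ 2 with ha_def
  set b : ℝ := 1 / lam' ^ 2 with hb_def
  have ha : 0 < a := by positivity
  have hb : 0 < b := by positivity
  have hab : a < b := by
    rw [ha_def, hb_def]
    apply one_div_lt_one_div_of_lt <;> nlinarith
  set F : ℝ := 1 / 4 * (b - a) * (b - a + 4 / η) with hF_def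
  have hF : F = (b - a) ^ 2 / 4 + (b - a) / η := by
    rw [hF_def]; field_simp
  have hFpos : 0 < F := by
    have h0 : 0 < (b - a) / η := div_pos (by linarith) hη
    rw [hF]; nlinarith [sq_nonneg (b - a)]
  set s : ℝ := Real.sqrt F with hs_def
  have hs2 : s ^ 2 = F := Real.sq_sqrt hFpos.le
  have hspos : 0 < s := Real.sqrt_pos.mpr hFpos
  set c : ℝ := 1 / 2 * (a + b) with hc_def
  have hcpos : 0 < c := by rw [hc_def]; linarith
  set Pstar : ℝ := max 0 (s - c) with hP_def
  have hPnn : 0 ≤ Pstar := le_max_left _ _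
  have hPge : s - c ≤ Pstar := le_max_right _ _
  set g : ℝ → ℝ := fun P => Real.log (a + P) - Real.log (b + P) - η * P with hg_def
  -- rewrite J in terms of g
  have hJ : ∀ P : ℝ, 0 ≤ P →
      Real.log (1 + P * lam ^ 2) - Real.log (1 + P * lam' ^ 2) - η * P
        = g P + (Real.log (lam ^ 2) - Real.log (lam' ^ 2)) := by
    intro P hP
    have h1 : (1 : ℝ) + P * lam ^ 2 = (a + P) * lam ^ 2 := by
      rw [ha_def]; field_simp
    have h2 : (1 : ℝ) + P * lam' ^ 2 = (b + P) * lam' ^ 2 := by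
      rw [hb_def]; field_simp
    rw [h1, h2, Real.log_mul (by positivity) (by positivity),
      Real.log_mul (by positivity) (by positivity)]
    simp only [hg_def]
    ring
  -- derivative
  have hd : ∀ x : ℝ, 0 ≤ x → HasDerivAt g (1 / (a + x) - 1 / (b + x) - η) x := by
    intro x hx
    have h1 : HasDerivAt (fun P : ℝ => Real.log (a + P)) (1 / (a + x)) x := by
      have := (HasDerivAt.const_add a (hasDerivAt_id x)).log (by positivity)
      simpa using this
    have h2 : HasDerivAt (fun P : ℝ => Real.log (b + P)) (1 / (b + x)) x := by
      have := (HasDerivAt.const_add b (hasDerivAt_id x)).log (by positivity)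
      simpa using this
    have h3 : HasDerivAt (fun P : ℝ => η * P) η x := by
      simpa using (hasDerivAt_id x).const_mul η
    exact (h1.sub h2).sub h3
  -- derivative sign analysis
  have dpos : ∀ x : ℝ, 0 < x → x < s - c → 0 ≤ 1 / (a + x) - 1 / (b + x) - η := by
    intro x hx hxs
    have hax : 0 < a + x := by linarith
    have hbx : 0 < b + x := by linarith
    have hxc : 0 ≤ x + c := by linarith
    have hsq : (x + c) ^ 2 ≤ F := by nlinarith
    have hprod : (a + x) * (b + x) ≤ (b - a) / η := by
      have hexp : (a + x) * (b + x) = (x + c) ^ 2 - (b - a) ^ 2 / 4 := by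
        rw [hc_def]; ring
      have hsq' := hsq
      rw [hF] at hsq'
      linarith
    have hkey : η * ((a + x) * (b + x)) ≤ b - a := by
      have h5 : η * ((a + x) * (b + x)) ≤ η * ((b - a) / η) :=
        mul_le_mul_of_nonneg_left hprod hη.le
      have h6 : η * ((b - a) / η) = b - a := by field_simp
      linarith
    have hdiff : 1 / (a + x) - 1 / (b + x) = (b - a) / ((a + x) * (b + x)) := by
      field_simp
      try ring
    rw [hdiff, sub_nonneg, le_div_iff₀ (by positivity)]
    linarith
  have dneg : ∀ x : ℝ, 0 < x → s - c ≤ x → 1 / (a + x) - 1 / (b + x) - η ≤ 0 := by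
    intro x hx hxs
    have hax : 0 < a + x := by linarith
    have hbx : 0 < b + x := by linarith
    have hsle : s ≤ x + c := by linarith
    have hsq : F ≤ (x + c) ^ 2 := by nlinarith
    have hprod : (b - a) / η ≤ (a + x) * (b + x) := by
      have hexp : (a + x) * (b + x) = (x + c) ^ 2 - (b - a) ^ 2 / 4 := by
        rw [hc_def]; ring
      have hsq' := hsq
      rw [hF] at hsq'
      linarith
    have hkey : b - a ≤ η * ((a + x) * (b + x)) := by
      have h5 : η * ((b - a) / η) ≤ η * ((a + x) * (b + x)) :=
        mul_le_mul_of_nonneg_left hprod hη.le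
      have h6 : η * ((b - a) / η) = b - a := by field_simp
      linarith
    have hdiff : 1 / (a + x) - 1 / (b + x) = (b - a) / ((a + x) * (b + x)) := by
      field_simp
      try ring
    rw [hdiff, sub_nonpos, div_le_iff₀ (by positivity)]
    linarith
  -- monotone on [0, Pstar]
  have hmono : MonotoneOn g (Set.Icc 0 Pstar) := by
    apply monotoneOn_of_deriv_nonneg (convex_Icc _ _)
    · exact fun x hx => ((hd x hx.1).continuousAt).continuousWithinAt
    · rw [interior_Icc]
      exact fun x hx => ((hd x hx.1.le).differentiableAt).differentiableWithinAt
    · rw [interior_Icc]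
      intro x hx
      rw [(hd x hx.1.le).deriv]
      have hxP : x < Pstar := hx.2
      have hxsc : x < s - c := by
        rcases le_or_gt (s - c) 0 with hle | hlt
        · rw [hP_def, max_eq_left hle] at hxP; linarith [hx.1]
        · rw [hP_def, max_eq_right hlt.le] at hxP; exact hxP
      exact dpos x hx.1 hxsc
  -- antitone on [Pstar, ∞)
  have hanti : AntitoneOn g (Set.Ici Pstar) := by
    apply antitoneOn_of_deriv_nonpos (convex_Ici _)
    · exact fun x hx => ((hd x (hPnn.trans hx)).continuousAt).continuousWithinAt
    · rw [interior_Ici]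
      exact fun x hx => ((hd x (hPnn.trans hx.le)).differentiableAt).differentiableWithinAt
    · rw [interior_Ici]
      intro x hx
      rw [(hd x (hPnn.trans hx.le)).deriv]
      exact dneg x (lt_of_le_of_lt hPnn hx) (le_trans hPge hx.le)
  have hgoal : g Q ≤ g Pstar := by
    rcases le_total Q Pstar with hle | hle
    · exact hmono ⟨hQ, hle⟩ ⟨hPnn, le_refl _⟩ hle
    · exact hanti (le_refl Pstar) hle hle
  rw [hJ Q hQ, hJ Pstar hPnn]
  linarith
end

section
/- If S = max(E₁,E₂) and T = min(E₁,E₂) with E₁,E₂ i.i.d. exponential(1), then the limit as P → ∞ of E[log(1+(P/2)S) − log(1+(P/2)T)] equals E[log(S/T)] = 2 ln 2. -/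
open MeasureTheory ProbabilityTheory Filter
open Real Set


lemma expIic {r : ℝ} (hr : 0 < r) (x : ℝ) :
    expMeasure r (Iic x) = ENNReal.ofReal (if 0 ≤ x then 1 - Real.exp (-(r * x)) else 0) := by
  have : expMeasure r (Iic x) = ∫⁻ y in Iic x, exponentialPDF r y := by
    rw [expMeasure, gammaMeasure, withDensity_apply _ measurableSet_Iic]
    rfl
  rw [this, lintegral_exponentialPDF_eq_antiDeriv hr x]

lemma expIoi {r : ℝ} (hr : 0 < r) (x : ℝ) (hx : 0 ≤ x) :
    expMeasure r (Ioi x) = ENNReal.ofReal (Real.exp (-(r * x))) := by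
  have := isProbabilityMeasure_expMeasure hr
  have h1 : expMeasure r (Ioi x) = 1 - expMeasure r (Iic x) := by
    rw [← compl_Iic, prob_compl_eq_one_sub measurableSet_Iic]
  have he : Real.exp (-(r * x)) ≤ 1 := by
    rw [Real.exp_le_one_iff]
    simp [mul_nonneg hr.le hx]
  rw [h1, expIic hr, if_pos hx]
  rw [ENNReal.ofReal_sub _ (Real.exp_pos _).le, ENNReal.ofReal_one,
    ENNReal.sub_sub_cancel ENNReal.one_ne_top (ENNReal.ofReal_le_one.mpr he)]

lemma expScale : expMeasure 2 = (expMeasure 1).map (fun x => x / 2) := by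
  have := isProbabilityMeasure_expMeasure (zero_lt_two (α := ℝ))
  have h1 := isProbabilityMeasure_expMeasure (zero_lt_one (α := ℝ))
  refine Measure.ext_of_Iic _ _ (fun a => ?_)
  rw [Measure.map_apply (by fun_prop) measurableSet_Iic]
  have hp : (fun x : ℝ => x / 2) ⁻¹' (Iic a) = Iic (2 * a) := by
    ext x
    simp [div_le_iff₀ (zero_lt_two (α := ℝ))]
    constructor <;> intro h <;> linarith
  rw [hp, expIic zero_lt_one, expIic zero_lt_two]
  have : (0 : ℝ) ≤ a ↔ (0:ℝ) ≤ 2 * a := by constructor <;> intro h <;> linarith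
  simp only [← this, one_mul]

lemma minLaw : ((expMeasure 1).prod (expMeasure 1)).map (fun p : ℝ × ℝ => min p.1 p.2)
    = expMeasure 2 := by
  have h1 := isProbabilityMeasure_expMeasure (zero_lt_one (α := ℝ))
  have h2 := isProbabilityMeasure_expMeasure (zero_lt_two (α := ℝ))
  have hm : Measurable (fun p : ℝ × ℝ => min p.1 p.2) := measurable_fst.min measurable_snd
  refine Measure.ext_of_Iic _ _ (fun a => ?_)
  rw [Measure.map_apply hm measurableSet_Iic]
  rcases lt_or_ge a 0 with ha | ha
  · have hz : expMeasure 1 (Iic a) = 0 := by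
      rw [expIic zero_lt_one, if_neg (not_le.mpr ha)]; simp
    have hsub : (fun p : ℝ × ℝ => min p.1 p.2) ⁻¹' (Iic a)
        ⊆ (Iic a ×ˢ univ) ∪ (univ ×ˢ Iic a) := by
      intro p hp
      simp only [mem_preimage, mem_Iic, min_le_iff] at hp
      rcases hp with h | h
      · exact Or.inl ⟨h, trivial⟩
      · exact Or.inr ⟨trivial, h⟩
    have : ((expMeasure 1).prod (expMeasure 1)) ((fun p : ℝ × ℝ => min p.1 p.2) ⁻¹' (Iic a)) = 0 := by
      refine measure_mono_null hsub (measure_union_null ?_ ?_) <;>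
        rw [Measure.prod_prod] <;> simp [hz]
    rw [this, expIic zero_lt_two, if_neg (not_le.mpr ha)]
    simp
  · have hc : ((fun p : ℝ × ℝ => min p.1 p.2) ⁻¹' (Iic a))ᶜ = Ioi a ×ˢ Ioi a := by
      ext p
      simp [lt_min_iff]
    have hmeas : MeasurableSet ((fun p : ℝ × ℝ => min p.1 p.2) ⁻¹' (Iic a)) :=
      hm measurableSet_Iic
    have := prob_compl_eq_one_sub (μ := (expMeasure 1).prod (expMeasure 1)) hmeas
    rw [hc, Measure.prod_prod, expIoi zero_lt_one a ha] at this
    have h3 : ((expMeasure 1).prod (expMeasure 1)) ((fun p : ℝ × ℝ => min p.1 p.2) ⁻¹' (Iic a))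
        = 1 - ENNReal.ofReal (Real.exp (-(1 * a))) * ENNReal.ofReal (Real.exp (-(1 * a))) := by
      rw [this, ENNReal.sub_sub_cancel ENNReal.one_ne_top (prob_le_one)]
    rw [h3, expIic zero_lt_two, if_pos ha, ← ENNReal.ofReal_mul (Real.exp_pos _).le,
      ← Real.exp_add, ENNReal.ofReal_sub _ (Real.exp_pos _).le, ENNReal.ofReal_one]
    norm_num
    ring_nf

lemma logBound0 {x : ℝ} (hx : 0 < x) (hx1 : x ≤ 1) : |Real.log x| ≤ 2 * x ^ (-(1/2) : ℝ) := by
  have hlx : Real.log x ≤ 0 := Real.log_nonpos hx.le hx1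
  rw [abs_of_nonpos hlx]
  have h1 : -Real.log x = Real.log x⁻¹ := (Real.log_inv x).symm
  rw [h1]
  have h2 : Real.log x⁻¹ = 2 * Real.log (x⁻¹ ^ ((1:ℝ)/2)) := by
    rw [Real.log_rpow (by positivity)]
    ring
  rw [h2]
  have h3 : Real.log (x⁻¹ ^ ((1:ℝ)/2)) ≤ x⁻¹ ^ ((1:ℝ)/2) := Real.log_le_self (by positivity)
  have h4 : x⁻¹ ^ ((1:ℝ)/2) = x ^ (-(1/2) : ℝ) := by
    rw [← Real.rpow_neg_one x, ← Real.rpow_mul hx.le]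
    norm_num
  nlinarith [h3, h4]

lemma intLog {r : ℝ} (hr : 1 ≤ r) : Integrable Real.log (expMeasure r) := by
  have hr0 : 0 < r := lt_of_lt_of_le zero_lt_one hr
  have hmeas : Measurable (exponentialPDF r) :=
    (measurable_exponentialPDFReal r).ennreal_ofReal
  have : expMeasure r = volume.withDensity (exponentialPDF r) := rfl
  rw [this, integrable_withDensity_iff hmeas (Eventually.of_forall fun x => ENNReal.ofReal_lt_top)]
  have hto : ∀ x, (exponentialPDF r x).toReal = if 0 ≤ x then r * Real.exp (-(r * x)) else 0 := by
    intro x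
    rw [exponentialPDF_eq, ENNReal.toReal_ofReal]
    split_ifs with h
    · positivity
    · exact le_rfl
  simp_rw [hto, mul_ite, mul_zero]
  have hind : (fun x => if 0 ≤ x then Real.log x * (r * Real.exp (-(r * x))) else 0)
      = Set.indicator (Ici 0) (fun x => Real.log x * (r * Real.exp (-(r * x)))) := by
    ext x
    rw [Set.indicator_apply]
    simp [mem_Ici]
  rw [hind, integrable_indicator_iff measurableSet_Ici,
    integrableOn_Ici_iff_integrableOn_Ioi, ← Ioc_union_Ioi_eq_Ioi (zero_le_one (α := ℝ)),
    integrableOn_union]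
  have hfm : Measurable (fun x => Real.log x * (r * Real.exp (-(r * x)))) := by
    exact Real.measurable_log.mul
      ((Real.measurable_exp.comp (measurable_id.const_mul r).neg).const_mul r)
  constructor
  · refine Integrable.mono'
      (g := fun x => (2 * r) * x ^ (-(1/2) : ℝ)) ?_ hfm.aestronglyMeasurable ?_
    · exact ((intervalIntegral.intervalIntegrable_rpow' (by norm_num)).1).const_mul _
    · rw [ae_restrict_iff' measurableSet_Ioc]
      refine Eventually.of_forall (fun x hx => ?_)
      obtain ⟨hx0, hx1⟩ := hx
      have h1 : |Real.log x| ≤ 2 * x ^ (-(1/2) : ℝ) := logBound0 hx0 hx1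
      have h2 : Real.exp (-(r * x)) ≤ 1 := by
        rw [Real.exp_le_one_iff]
        simp [mul_nonneg hr0.le hx0.le]
      have h3 : (0:ℝ) < x ^ (-(1/2) : ℝ) := Real.rpow_pos_of_pos hx0 _
      show ‖Real.log x * (r * Real.exp (-(r * x)))‖ ≤ 2 * r * x ^ (-(1/2) : ℝ)
      rw [norm_mul, Real.norm_eq_abs, Real.norm_eq_abs,
        abs_of_nonneg (by positivity : (0:ℝ) ≤ r * Real.exp (-(r * x)))]
      have hb : |Real.log x| * (r * Real.exp (-(r * x))) ≤ (2 * x ^ (-(1/2) : ℝ)) * (r * 1) := by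
        apply mul_le_mul h1 _ (by positivity) (by positivity)
        nlinarith [Real.exp_pos (-(r * x))]
      nlinarith
  · refine Integrable.mono'
      (g := fun x => r * (Real.exp (-x) * x ^ ((2:ℝ) - 1))) ?_ hfm.aestronglyMeasurable ?_
    · exact ((Real.GammaIntegral_convergent (by norm_num : (0:ℝ) < 2)).mono_set
        (Ioi_subset_Ioi zero_le_one)).const_mul _
    · rw [ae_restrict_iff' measurableSet_Ioi]
      refine Eventually.of_forall (fun x hx => ?_)
      have hx1 : (1:ℝ) ≤ x := le_of_lt hx
      have hx0 : (0:ℝ) < x := lt_of_lt_of_le zero_lt_one hx1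
      have hlog : |Real.log x| ≤ x := by
        rw [abs_of_nonneg (Real.log_nonneg hx1)]
        exact (Real.log_le_self hx0.le)
      have hexp : Real.exp (-(r * x)) ≤ Real.exp (-x) := by
        apply Real.exp_le_exp.mpr
        nlinarith
      have hx2 : x ^ ((2:ℝ) - 1) = x := by
        norm_num
      show ‖Real.log x * (r * Real.exp (-(r * x)))‖ ≤ r * (Real.exp (-x) * x ^ ((2:ℝ) - 1))
      rw [norm_mul, Real.norm_eq_abs, Real.norm_eq_abs,
        abs_of_nonneg (by positivity : (0:ℝ) ≤ r * Real.exp (-(r * x))), hx2]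
      have hb : |Real.log x| * (r * Real.exp (-(r * x))) ≤ x * (r * Real.exp (-x)) := by
        apply mul_le_mul hlog _ (by positivity) (by positivity)
        exact mul_le_mul_of_nonneg_left hexp hr0.le
      nlinarith

lemma aePosExp {r : ℝ} (hr : 0 < r) : ∀ᵐ x ∂expMeasure r, 0 < x := by
  rw [ae_iff]
  have : {x : ℝ | ¬ 0 < x} = Iic 0 := by
    ext x; simp
  rw [this, expIic hr]
  simp

lemma intLog2 : ∫ x, Real.log x ∂expMeasure 2
    = (∫ x, Real.log x ∂expMeasure 1) - Real.log 2 := by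
  have h1 := isProbabilityMeasure_expMeasure (zero_lt_one (α := ℝ))
  rw [expScale, integral_map (by fun_prop) Real.measurable_log.aestronglyMeasurable]
  have hae : ∀ᵐ x ∂expMeasure 1, Real.log (x / 2) = Real.log x - Real.log 2 := by
    filter_upwards [aePosExp (zero_lt_one (α := ℝ))] with x hx
    exact Real.log_div (ne_of_gt hx) two_ne_zero
  rw [integral_congr_ae hae, integral_sub (intLog le_rfl) (integrable_const _),
    integral_const]
  simp

lemma prodAePos : ∀ᵐ p ∂((expMeasure 1).prod (expMeasure 1)), 0 < p.1 ∧ 0 < p.2 := by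
  have h1 := isProbabilityMeasure_expMeasure (zero_lt_one (α := ℝ))
  rw [ae_iff]
  have hz : expMeasure 1 (Iic 0) = 0 := by rw [expIic zero_lt_one]; simp
  refine measure_mono_null (t := (Iic 0 ×ˢ univ) ∪ (univ ×ˢ Iic 0)) ?_ ?_
  · intro p hp
    simp only [mem_setOf_eq, not_and_or, not_lt] at hp
    rcases hp with h | h
    · exact Or.inl ⟨h, trivial⟩
    · exact Or.inr ⟨trivial, h⟩
  · refine measure_union_null ?_ ?_ <;> rw [Measure.prod_prod] <;> simp [hz]

lemma keyProd :
    Integrable (fun p : ℝ × ℝ => Real.log (max p.1 p.2 / min p.1 p.2))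
      ((expMeasure 1).prod (expMeasure 1)) ∧
    ∫ p, Real.log (max p.1 p.2 / min p.1 p.2) ∂((expMeasure 1).prod (expMeasure 1))
      = 2 * Real.log 2 := by
  have h1 := isProbabilityMeasure_expMeasure (zero_lt_one (α := ℝ))
  have hmapfst : ((expMeasure 1).prod (expMeasure 1)).map Prod.fst = expMeasure 1 := by
    rw [Measure.map_fst_prod]; simp
  have hmapsnd : ((expMeasure 1).prod (expMeasure 1)).map Prod.snd = expMeasure 1 := by
    rw [Measure.map_snd_prod]; simp
  have hminm : Measurable (fun p : ℝ × ℝ => min p.1 p.2) := measurable_fst.min measurable_snd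
  have hf1 : Integrable (fun p : ℝ × ℝ => Real.log p.1) ((expMeasure 1).prod (expMeasure 1)) := by
    have := (integrable_map_measure (Real.measurable_log.aestronglyMeasurable)
      measurable_fst.aemeasurable).mp (by rw [hmapfst]; exact intLog le_rfl)
    exact this
  have hf2 : Integrable (fun p : ℝ × ℝ => Real.log p.2) ((expMeasure 1).prod (expMeasure 1)) := by
    have := (integrable_map_measure (Real.measurable_log.aestronglyMeasurable)
      measurable_snd.aemeasurable).mp (by rw [hmapsnd]; exact intLog le_rfl)
    exact this
  have hfmin : Integrable (fun p : ℝ × ℝ => Real.log (min p.1 p.2))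
      ((expMeasure 1).prod (expMeasure 1)) := by
    have := (integrable_map_measure (Real.measurable_log.aestronglyMeasurable)
      hminm.aemeasurable).mp (by rw [minLaw]; exact intLog one_le_two)
    exact this
  have hae : ∀ᵐ p ∂((expMeasure 1).prod (expMeasure 1)), Real.log (max p.1 p.2 / min p.1 p.2)
      = Real.log p.1 + Real.log p.2 - 2 * Real.log (min p.1 p.2) := by
    filter_upwards [prodAePos] with p hp
    obtain ⟨hp1, hp2⟩ := hp
    rcases le_total p.1 p.2 with h | h
    · rw [max_eq_right h, min_eq_left h, Real.log_div (ne_of_gt hp2) (ne_of_gt hp1)]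
      ring
    · rw [max_eq_left h, min_eq_right h, Real.log_div (ne_of_gt hp1) (ne_of_gt hp2)]
      ring
  have hadd : Integrable (fun p : ℝ × ℝ => Real.log p.1 + Real.log p.2)
      ((expMeasure 1).prod (expMeasure 1)) := hf1.add hf2
  have hmul : Integrable (fun p : ℝ × ℝ => 2 * Real.log (min p.1 p.2))
      ((expMeasure 1).prod (expMeasure 1)) := hfmin.const_mul 2
  have hsum : Integrable
      (fun p : ℝ × ℝ => Real.log p.1 + Real.log p.2 - 2 * Real.log (min p.1 p.2))
      ((expMeasure 1).prod (expMeasure 1)) := hadd.sub hmul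
  have hint1 : ∫ p, Real.log p.1 ∂((expMeasure 1).prod (expMeasure 1))
      = ∫ x, Real.log x ∂expMeasure 1 := by
    rw [← integral_map measurable_fst.aemeasurable
      Real.measurable_log.aestronglyMeasurable, hmapfst]
  have hint2 : ∫ p, Real.log p.2 ∂((expMeasure 1).prod (expMeasure 1))
      = ∫ x, Real.log x ∂expMeasure 1 := by
    rw [← integral_map measurable_snd.aemeasurable
      Real.measurable_log.aestronglyMeasurable, hmapsnd]
  have hintmin : ∫ p, Real.log (min p.1 p.2) ∂((expMeasure 1).prod (expMeasure 1))
      = (∫ x, Real.log x ∂expMeasure 1) - Real.log 2 := by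
    rw [← integral_map hminm.aemeasurable
      Real.measurable_log.aestronglyMeasurable, minLaw, intLog2]
  refine ⟨(integrable_congr hae).mpr hsum, ?_⟩
  rw [integral_congr_ae hae, integral_sub hadd hmul, integral_add hf1 hf2,
    integral_const_mul, hint1, hint2, hintmin]
  ring

/-- If `E₁, E₂` are i.i.d. exponential(1), `S = max(E₁,E₂)`, `T = min(E₁,E₂)`,
then `E[log(1+(P/2)S) − log(1+(P/2)T)] → E[log(S/T)] = 2 ln 2` as `P → ∞`. -/
theorem stmt18 {Ω : Type*} [MeasurableSpace Ω] (μ : Measure Ω)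
    [IsProbabilityMeasure μ] (E₁ E₂ : Ω → ℝ)
    (h1 : Measurable E₁) (h2 : Measurable E₂)
    (hlaw1 : μ.map E₁ = expMeasure 1) (hlaw2 : μ.map E₂ = expMeasure 1)
    (hindep : IndepFun E₁ E₂ μ) :
    Tendsto (fun P : ℝ =>
        ∫ ω, (Real.log (1 + (P / 2) * max (E₁ ω) (E₂ ω))
                - Real.log (1 + (P / 2) * min (E₁ ω) (E₂ ω))) ∂μ)
      atTop (nhds (2 * Real.log 2)) ∧
    ∫ ω, Real.log (max (E₁ ω) (E₂ ω) / min (E₁ ω) (E₂ ω)) ∂μ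
      = 2 * Real.log 2 := by
  have hΦ : Measurable (fun ω => (E₁ ω, E₂ ω)) := h1.prodMk h2
  have hmap : μ.map (fun ω => (E₁ ω, E₂ ω)) = (expMeasure 1).prod (expMeasure 1) := by
    rw [(indepFun_iff_map_prod_eq_prod_map_map h1.aemeasurable h2.aemeasurable).mp hindep,
      hlaw1, hlaw2]
  have hGm : Measurable (fun p : ℝ × ℝ => Real.log (max p.1 p.2 / min p.1 p.2)) :=
    Real.measurable_log.comp ((measurable_fst.max measurable_snd).div
      (measurable_fst.min measurable_snd))
  have hpart2 : ∫ ω, Real.log (max (E₁ ω) (E₂ ω) / min (E₁ ω) (E₂ ω)) ∂μ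
      = 2 * Real.log 2 := by
    rw [← keyProd.2, ← hmap, integral_map hΦ.aemeasurable hGm.aestronglyMeasurable]
  have hGint : Integrable (fun ω => Real.log (max (E₁ ω) (E₂ ω) / min (E₁ ω) (E₂ ω))) μ := by
    have := keyProd.1
    rw [← hmap] at this
    have := (integrable_map_measure hGm.aestronglyMeasurable hΦ.aemeasurable).mp this
    exact this
  have hA : ∀ᵐ ω ∂μ, 0 < E₁ ω := by
    rw [ae_iff]
    have : {ω | ¬ 0 < E₁ ω} = E₁ ⁻¹' (Set.Iic 0) := by ext ω; simp
    rw [this, ← Measure.map_apply h1 measurableSet_Iic, hlaw1, expIic zero_lt_one]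
    simp
  have hB : ∀ᵐ ω ∂μ, 0 < E₂ ω := by
    rw [ae_iff]
    have : {ω | ¬ 0 < E₂ ω} = E₂ ⁻¹' (Set.Iic 0) := by ext ω; simp
    rw [this, ← Measure.map_apply h2 measurableSet_Iic, hlaw2, expIic zero_lt_one]
    simp
  refine ⟨?_, hpart2⟩
  have hconv := tendsto_integral_filter_of_dominated_convergence
    (μ := μ) (l := atTop)
    (F := fun P ω => Real.log (1 + (P / 2) * max (E₁ ω) (E₂ ω))
      - Real.log (1 + (P / 2) * min (E₁ ω) (E₂ ω)))
    (f := fun ω => Real.log (max (E₁ ω) (E₂ ω) / min (E₁ ω) (E₂ ω)))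
    (bound := fun ω => Real.log (max (E₁ ω) (E₂ ω) / min (E₁ ω) (E₂ ω)))
    ?_ ?_ hGint ?_
  · rwa [hpart2] at hconv
  · refine Eventually.of_forall (fun P => ?_)
    exact ((Real.measurable_log.comp (measurable_const.add
        ((h1.max h2).const_mul (P / 2)))).sub
      (Real.measurable_log.comp (measurable_const.add
        ((h1.min h2).const_mul (P / 2))))).aestronglyMeasurable
  · filter_upwards [eventually_ge_atTop (0:ℝ)] with P hP
    filter_upwards [hA, hB] with ω hω1 hω2
    set S := max (E₁ ω) (E₂ ω) with hS
    set T := min (E₁ ω) (E₂ ω) with hT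
    have hT0 : 0 < T := lt_min hω1 hω2
    have hTS : T ≤ S := min_le_max
    have hS0 : 0 < S := lt_of_lt_of_le hT0 hTS
    have ha : 0 ≤ P / 2 := by linarith
    have h01 : (0:ℝ) < 1 + P / 2 * T := by nlinarith
    have h02 : (0:ℝ) < 1 + P / 2 * S := by nlinarith
    have hmono : Real.log (1 + P / 2 * T) ≤ Real.log (1 + P / 2 * S) :=
      Real.log_le_log h01 (by nlinarith)
    have hk : Real.log ((1 + P / 2 * S) * T) ≤ Real.log (S * (1 + P / 2 * T)) :=
      Real.log_le_log (by positivity) (by nlinarith)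
    rw [Real.log_mul (ne_of_gt h02) (ne_of_gt hT0),
      Real.log_mul (ne_of_gt hS0) (ne_of_gt h01)] at hk
    rw [Real.norm_eq_abs, abs_of_nonneg (by linarith), Real.log_div (ne_of_gt hS0) (ne_of_gt hT0)]
    linarith
  · filter_upwards [hA, hB] with ω hω1 hω2
    set S := max (E₁ ω) (E₂ ω) with hS
    set T := min (E₁ ω) (E₂ ω) with hT
    have hT0 : 0 < T := lt_min hω1 hω2
    have hS0 : 0 < S := lt_of_lt_of_le hT0 min_le_max
    have hnum : Tendsto (fun P : ℝ => 2 / P + S) atTop (nhds S) := by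
      have := (tendsto_const_nhds (x := (2:ℝ)) (f := atTop)).div_atTop tendsto_id
      simpa using this.add (tendsto_const_nhds (x := S))
    have hden : Tendsto (fun P : ℝ => 2 / P + T) atTop (nhds T) := by
      have := (tendsto_const_nhds (x := (2:ℝ)) (f := atTop)).div_atTop tendsto_id
      simpa using this.add (tendsto_const_nhds (x := T))
    have hdiv : Tendsto (fun P : ℝ => (2 / P + S) / (2 / P + T)) atTop (nhds (S / T)) :=
      hnum.div hden (ne_of_gt hT0)
    have hlog : Tendsto (fun P : ℝ => Real.log ((2 / P + S) / (2 / P + T))) atTop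
        (nhds (Real.log (S / T))) :=
      ((Real.continuousAt_log (ne_of_gt (div_pos hS0 hT0))).tendsto.comp hdiv)
    refine hlog.congr' ?_
    filter_upwards [eventually_gt_atTop (0:ℝ)] with P hP
    have hP2 : (0:ℝ) < P / 2 := by linarith
    have hn0 : (0:ℝ) < 2 / P + S := by positivity
    have hd0 : (0:ℝ) < 2 / P + T := by positivity
    have e1 : 1 + P / 2 * S = (P / 2) * (2 / P + S) := by
      field_simp
    have e2 : 1 + P / 2 * T = (P / 2) * (2 / P + T) := by
      field_simp
    rw [Real.log_div (ne_of_gt hn0) (ne_of_gt hd0), e1, e2,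
      Real.log_mul (ne_of_gt hP2) (ne_of_gt hn0), Real.log_mul (ne_of_gt hP2) (ne_of_gt hd0)]
    ring
end
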